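/- Let d ≥ 2 be an integer, K > 0 a rational number, and k an integer with 0 ≤ k ≤ d. Suppose rational numbers w, I, N satisfy: (i) d·w − K = I + N (degree additivity for the image and kernel of β), (ii) N ≤ (k/d)·(d·w − K) (slope semistability of the kernel, where k is its rank), and (iii) w + I ≤ 0 (Higgs semistability of W ⊕ Im β). If k < d, then w ≤ ((d−k)/(d−k+1))·(K/d). -/
import Mathlib


theorem su_p1_degree_inequality
    (d k : ℕ) (hd : 2 ≤ d) (hk : k ≤ d) (hkd : k < d)
    (K w I N : ℚ) (hK : 0 < K)
    (h1 : (d : ℚ) * w - K = I + N)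
    (h2 : N ≤ ((k : ℚ) / (d : ℚ)) * ((d : ℚ) * w - K))
    (h3 : w + I ≤ 0) :
    w ≤ (((d : ℚ) - k) / ((d : ℚ) - k + 1)) * (K / d) := by
  have hd0 : (0:ℚ) < d := by exact_mod_cast Nat.lt_of_lt_of_le (by norm_num) hd
  have hdk : (0:ℚ) < (d:ℚ) - k := by
    have : (k:ℚ) < d := by exact_mod_cast hkd
    linarith
  have h2' : N * d ≤ (k:ℚ) * ((d:ℚ) * w - K) := by
    have := mul_le_mul_of_nonneg_right h2 hd0.le
    calc N * d ≤ (k:ℚ) / d * ((d:ℚ) * w - K) * d := this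
    _ = (k:ℚ) * ((d:ℚ) * w - K) := by field_simp
  rw [show (((d:ℚ) - k) / ((d:ℚ) - k + 1)) * (K / d)
      = ((d:ℚ) - k) * K / (((d:ℚ) - k + 1) * d) by field_simp,
    le_div_iff₀ (by positivity)]
  nlinarith [mul_le_mul_of_nonneg_right h3 hd0.le, h1, h2']
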